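/- Fix n > 0 and ν ≥ 0, and define F(b) = b·(g((n+ν)/b) − g(ν/b)) for b > 0, where g(x) = (x+1)·log(x+1) − x·log x and g(0) = 0. Then F is differentiable on (0, ∞) with F′(b) = log((b + n + ν)/(b + ν)) > 0 for every b > 0; in particular the Holevo capacity C_J(b, τ, n, ν) = F(b) is strictly increasing in the baud-rate b. -/

import Mathlib

/-- g(x) = (x+1)·log(x+1) − x·log x (with the Mathlib convention log 0 = 0,
so g(0) = 0), the Holevo capacity per pulse. -/
noncomputable def g (x : ℝ) : ℝ := (x + 1) * Real.log (x + 1) - x * Real.log x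

lemma bg_eq (x b : ℝ) (hx : 0 ≤ x) (hb : 0 < b) :
    b * g (x / b) = (x + b) * Real.log (x + b) - x * Real.log x - b * Real.log b := by
  rcases eq_or_lt_of_le hx with h | h
  · subst h
    simp [g, Real.log_zero]
  · have hb' : b ≠ 0 := ne_of_gt hb
    have h1 : Real.log (x / b + 1) = Real.log (x + b) - Real.log b := by
      rw [show x / b + 1 = (x + b) / b by field_simp, Real.log_div (by positivity) hb']
    have h2 : Real.log (x / b) = Real.log x - Real.log b := Real.log_div (ne_of_gt h) hb'
    simp only [g, h1, h2]
    field_simp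
    ring

lemma hder (c b : ℝ) (h : 0 < b + c) :
    HasDerivAt (fun b : ℝ => (b + c) * Real.log (b + c)) (Real.log (b + c) + 1) b := by
  have h1 : HasDerivAt (fun b : ℝ => b + c) 1 b := (hasDerivAt_id b).add_const c
  have h2 : HasDerivAt (fun b : ℝ => Real.log (b + c)) (1 / (b + c)) b := by
    simpa using h1.log (ne_of_gt h)
  have := h1.fun_mul h2
  rw [mul_one_div_cancel (ne_of_gt h), one_mul] at this
  exact this

/-- STATEMENT 15: for fixed n > 0, ν ≥ 0, the Holevo capacity
F(b) = b·(g((n+ν)/b) − g(ν/b)) is differentiable on (0,∞) with derivative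
F′(b) = log((b+n+ν)/(b+ν)) > 0; in particular F is strictly increasing in b. -/
theorem holevo_strictly_increasing_in_baudrate (n ν : ℝ) (hn : 0 < n) (hν : 0 ≤ ν) :
    (∀ b : ℝ, 0 < b →
      HasDerivAt (fun b : ℝ => b * (g ((n + ν) / b) - g (ν / b)))
        (Real.log ((b + n + ν) / (b + ν))) b ∧
      0 < Real.log ((b + n + ν) / (b + ν))) ∧
    StrictMonoOn (fun b : ℝ => b * (g ((n + ν) / b) - g (ν / b))) (Set.Ioi 0) := by
  have key : ∀ b : ℝ, 0 < b →
      HasDerivAt (fun b : ℝ => b * (g ((n + ν) / b) - g (ν / b)))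
        (Real.log ((b + n + ν) / (b + ν))) b := by
    intro b hb
    set φ : ℝ → ℝ := fun b => ((b + (n + ν)) * Real.log (b + (n + ν))
        - (b + ν) * Real.log (b + ν))
        - ((n + ν) * Real.log (n + ν) - ν * Real.log ν) with hφ
    have heq : (fun b : ℝ => b * (g ((n + ν) / b) - g (ν / b))) =ᶠ[nhds b] φ := by
      filter_upwards [eventually_gt_nhds hb] with b' hb'
      have e1 := bg_eq (n + ν) b' (by positivity) hb'
      have e2 := bg_eq ν b' hν hb'
      simp only [φ]
      rw [mul_sub, e1, e2]; ring
    have hd1 : HasDerivAt φ ((Real.log (b + (n + ν)) + 1) - (Real.log (b + ν) + 1)) b := by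
      exact ((hder (n + ν) b (by positivity)).sub (hder ν b (by positivity))).sub_const _
    have hd2 : HasDerivAt φ (Real.log ((b + n + ν) / (b + ν))) b := by
      convert hd1 using 1
      rw [Real.log_div (by positivity) (by positivity)]
      ring
    exact hd2.congr_of_eventuallyEq heq
  have hpos : ∀ b : ℝ, 0 < b → 0 < Real.log ((b + n + ν) / (b + ν)) := by
    intro b hb
    apply Real.log_pos
    rw [one_lt_div (by positivity)]
    linarith
  refine ⟨fun b hb => ⟨key b hb, hpos b hb⟩, ?_⟩
  apply strictMonoOn_of_deriv_pos (convex_Ioi 0)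
  · intro b hb
    exact ((key b hb).differentiableAt).continuousAt.continuousWithinAt
  · intro b hb
    rw [interior_Ioi] at hb
    rw [(key b hb).deriv]
    exact hpos b hb
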